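/- In genus 0 with two marked points, the two-point series \hat{C}_{0,2}(w_1,w_2;\tau) = -\sum_{\alpha,\beta ≥ 1} ((\tau+1)/\tau) (1/(\alpha+\beta)) (\prod_{a=0}^{\alpha-1}(\alpha\tau+a)/\alpha!) (\prod_{a=0}^{\beta-1}(\beta\tau+a)/\beta!) x_1^{\alpha} x_2^{\beta} satisfies (x_1 ∂/∂x_1 + x_2 ∂/∂x_2) \hat{C}_{0,2} = -\tau(\tau+1) · (y_1 y_2)/((1-(\tau+1)y_1)(1-(\tau+1)y_2)), where y_i = y(x_i) is the solution of y(1-y)^\tau = x with y(0)=0. -/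

import Mathlib

open PowerSeries

noncomputable section

/-- `(1+u)^τ := ∑_n binom(τ,n) u^n`, the formal binomial power. -/
def binomPow {K : Type*} [Field K] (τ : K) (u : PowerSeries K) : PowerSeries K :=
  PowerSeries.mk fun m => ∑ n ∈ Finset.range (m + 1),
    ((∏ a ∈ Finset.range n, (τ - (a : K))) / (Nat.factorial n : K)) *
      PowerSeries.coeff (R := K) m (u ^ n)

/-- The coefficient `∏_{a=0}^{α-1}(ατ+a)/α!`. -/
def lambertCoeff (τ : RatFunc ℚ) (α : ℕ) : RatFunc ℚ :=
  (∏ a ∈ Finset.range α, ((α : RatFunc ℚ) * τ + (a : RatFunc ℚ))) /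
    (Nat.factorial α : RatFunc ℚ)

/-- The two-point genus-zero series
`Ĉ_{0,2} = -∑_{α,β ≥ 1} ((τ+1)/τ)(1/(α+β)) (∏(ατ+a)/α!)(∏(βτ+a)/β!) x_1^α x_2^β`. -/
def C02 (τ : RatFunc ℚ) : MvPowerSeries (Fin 2) (RatFunc ℚ) :=
  fun d =>
    if d 0 ≠ 0 ∧ d 1 ≠ 0 then
      -(((τ + 1) / τ) * (1 / ((d 0 + d 1 : ℕ) : RatFunc ℚ)) *
        lambertCoeff τ (d 0) * lambertCoeff τ (d 1))
    else 0

/-- The Euler operator `x_1 ∂/∂x_1 + x_2 ∂/∂x_2` on two-variable power series. -/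
def eulerOp (f : MvPowerSeries (Fin 2) (RatFunc ℚ)) : MvPowerSeries (Fin 2) (RatFunc ℚ) :=
  fun d => (((d 0 + d 1 : ℕ) : RatFunc ℚ)) * f d

/-- The one-variable power series `y(x_v)` placed in variable `v` of a two-variable ring. -/
def inVar (v : Fin 2) (y : PowerSeries (RatFunc ℚ)) : MvPowerSeries (Fin 2) (RatFunc ℚ) :=
  fun d => if ∀ w, w ≠ v → d w = 0 then PowerSeries.coeff (R := RatFunc ℚ) (d v) y else 0

set_option linter.unusedSectionVars false

instance : CharZero (RatFunc ℚ) := IsFractionRing.charZero_of_isFractionRing (Polynomial ℚ)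

namespace C02Aux

open Finset

variable {K : Type*} [Field K] [CharZero K]

/-- generalized binomial coefficient -/
def bc (σ : K) (n : ℕ) : K := (∏ a ∈ Finset.range n, (σ - (a : K))) / (Nat.factorial n : K)

lemma desc_smeval_prod (σ : K) (n : ℕ) :
    (descPochhammer ℤ n).smeval σ = ∏ a ∈ Finset.range n, (σ - (a : K)) := by
  induction n with
  | zero => simp [descPochhammer_zero]
  | succ n ih =>
      rw [descPochhammer_succ_right, Polynomial.smeval_mul, ih, Finset.prod_range_succ]
      congr 1
      rw [Polynomial.smeval_sub, Polynomial.smeval_X, Polynomial.smeval_natCast]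
      simp

lemma bc_eq_choose (σ : K) (n : ℕ) : bc σ n = Ring.choose σ n := by
  have h := Ring.descPochhammer_eq_factorial_smul_choose σ n
  rw [desc_smeval_prod] at h
  rw [bc, h, nsmul_eq_mul]
  exact mul_div_cancel_left₀ _ (Nat.cast_ne_zero.2 n.factorial_ne_zero)

lemma bc_vandermonde (σ ρ : K) (n : ℕ) :
    ∑ ij ∈ Finset.HasAntidiagonal.antidiagonal n, bc σ ij.1 * bc ρ ij.2 = bc (σ + ρ) n := by
  simp only [bc_eq_choose]
  exact (Ring.add_choose_eq n (Commute.all σ ρ)).symm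

lemma bc_zero_left (n : ℕ) : bc (0 : K) (n + 1) = 0 := by
  have : ((0:K) - ((0:ℕ):K)) = 0 := by simp
  rw [bc, Finset.prod_eq_zero (Finset.mem_range.2 (Nat.succ_pos n)) this, zero_div]

@[simp] lemma bc_zero_right (σ : K) : bc σ 0 = 1 := by simp [bc]

lemma bc_one_left : ∀ n, 2 ≤ n → bc (1 : K) n = 0 := by
  intro n hn
  obtain ⟨m, rfl⟩ : ∃ m, n = m + 2 := ⟨n - 2, by omega⟩
  have h1 : ((1:K) - ((1:ℕ):K)) = 0 := by simp
  rw [bc, Finset.prod_eq_zero (Finset.mem_range.2 (by omega)) h1, zero_div]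

@[simp] lemma bc_one_one : bc (1 : K) 1 = 1 := by simp [bc]

lemma bc_succ_mul (σ : K) (n : ℕ) :
    bc σ (n + 1) * ((n : K) + 1) = σ * bc (σ - 1) n := by
  rw [bc, bc]
  rw [Finset.prod_range_succ']
  have h : ∀ a ∈ Finset.range n, σ - ((a + 1 : ℕ) : K) = (σ - 1) - (a : K) := by
    intro a _; push_cast; ring
  rw [Finset.prod_congr rfl h]
  have hfac : ((n+1).factorial : K) = (n.factorial : K) * ((n:K)+1) := by
    rw [Nat.factorial_succ]; push_cast; ring
  have h1 : ((n:K)+1) ≠ 0 := by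
    have := Nat.cast_add_one_ne_zero (R := K) n; simpa using this
  have h2 : (n.factorial : K) ≠ 0 := Nat.cast_ne_zero.2 (Nat.factorial_ne_zero n)
  rw [hfac]
  field_simp [hfac]
  ring


variable {u g : PowerSeries K}

lemma coeff_binomPow (σ : K) (u : PowerSeries K) (m : ℕ) :
    coeff (R := K) m (binomPow σ u) = ∑ n ∈ range (m + 1), bc σ n * coeff (R := K) m (u ^ n) := by
  simp [binomPow, bc, coeff_mk]

lemma coeff_pow_eq_zero (hu : constantCoeff (R := K) u = 0) {m n : ℕ} (h : m < n) :
    coeff (R := K) m (u ^ n) = 0 := by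
  have hX : (X : PowerSeries K) ∣ u := X_dvd_iff.2 hu
  exact X_pow_dvd_iff.1 (pow_dvd_pow_of_dvd hX n) m h

lemma coeff_binomPow_ext (σ : K) (hu : constantCoeff (R := K) u = 0) {m M : ℕ} (hm : m ≤ M) :
    coeff (R := K) m (binomPow σ u) = ∑ n ∈ range (M + 1), bc σ n * coeff (R := K) m (u ^ n) := by
  rw [coeff_binomPow]
  refine Finset.sum_subset (by intro x hx; simp only [mem_range] at *; omega) ?_
  intro n hn hn'
  simp only [mem_range] at hn hn'
  rw [coeff_pow_eq_zero hu (by omega), mul_zero]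

/-- The key reusable computation. -/
lemma coeff_binomPow_mul (σ : K) (hu : constantCoeff (R := K) u = 0) (g : PowerSeries K) (m : ℕ) :
    coeff (R := K) m (binomPow σ u * g) = ∑ i ∈ range (m + 1), bc σ i * coeff (R := K) m (u ^ i * g) := by
  rw [coeff_mul]
  have h1 : ∀ p ∈ antidiagonal m,
      coeff (R := K) p.1 (binomPow σ u) * coeff (R := K) p.2 g
        = ∑ i ∈ range (m + 1), bc σ i * (coeff (R := K) p.1 (u ^ i) * coeff (R := K) p.2 g) := by
    intro p hp
    rw [coeff_binomPow_ext σ hu (Nat.le_of_lt_succ (Nat.lt_succ_of_le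
      (show p.1 ≤ m by rw [Finset.HasAntidiagonal.mem_antidiagonal] at hp; omega)))]
    rw [Finset.sum_mul]
    refine Finset.sum_congr rfl fun i _ => by ring
  rw [Finset.sum_congr rfl h1, Finset.sum_comm]
  refine Finset.sum_congr rfl fun i _ => ?_
  rw [← Finset.mul_sum, coeff_mul]

/-- triangle lemma -/
lemma sum_square_eq_triangle {M : Type*} [AddCommMonoid M] (m : ℕ) (T : ℕ → ℕ → M)
    (hT : ∀ i j, m < i + j → T i j = 0) :
    ∑ i ∈ range (m + 1), ∑ j ∈ range (m + 1), T i j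
      = ∑ n ∈ range (m + 1), ∑ ij ∈ antidiagonal n, T ij.1 ij.2 := by
  have hset : (range (m+1)).biUnion (fun n => antidiagonal n)
      = (range (m+1) ×ˢ range (m+1)).filter (fun p => p.1 + p.2 ≤ m) := by
    ext p
    simp only [mem_biUnion, mem_range, mem_filter, mem_product, Finset.HasAntidiagonal.mem_antidiagonal]
    constructor
    · rintro ⟨n, hn, rfl⟩; omega
    · rintro ⟨⟨h1, h2⟩, h3⟩; exact ⟨p.1 + p.2, by omega, rfl⟩
  have hdisj : ∀ x ∈ range (m+1), ∀ y ∈ range (m+1), x ≠ y →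
      Disjoint (antidiagonal x) (antidiagonal y) := by
    intro x _ y _ hxy
    simp only [Finset.disjoint_left, Finset.HasAntidiagonal.mem_antidiagonal]
    rintro p rfl h; exact hxy h
  rw [← Finset.sum_biUnion hdisj, hset]
  rw [Finset.sum_filter_of_ne (by intro p hp hne; by_contra h; exact hne (hT p.1 p.2 (by omega)))]
  rw [← Finset.sum_product']

lemma binomPow_mul (σ ρ : K) (hu : constantCoeff (R := K) u = 0) :
    binomPow σ u * binomPow ρ u = binomPow (σ + ρ) u := by
  ext m
  rw [coeff_binomPow_mul σ hu _ m, coeff_binomPow]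
  have h1 : ∀ i ∈ range (m+1), bc σ i * coeff (R := K) m (u ^ i * binomPow ρ u)
      = ∑ j ∈ range (m+1), bc σ i * bc ρ j * coeff (R := K) m (u ^ (i + j)) := by
    intro i _
    rw [mul_comm (u ^ i), coeff_binomPow_mul ρ hu _ m, Finset.mul_sum]
    refine Finset.sum_congr rfl fun j _ => ?_
    rw [mul_comm (u ^ j), ← pow_add]
    ring
  rw [Finset.sum_congr rfl h1]
  rw [sum_square_eq_triangle m (fun i j => bc σ i * bc ρ j * coeff (R := K) m (u ^ (i+j)))
    (fun i j h => by
      show bc σ i * bc ρ j * (coeff (R := K) m) (u ^ (i+j)) = 0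
      rw [coeff_pow_eq_zero hu h, mul_zero])]
  refine Finset.sum_congr rfl fun n hn => ?_
  rw [← bc_vandermonde σ ρ n, Finset.sum_mul]
  refine Finset.sum_congr rfl fun ij hij => ?_
  rw [Finset.HasAntidiagonal.mem_antidiagonal.1 hij]

lemma binomPow_zero' : binomPow (0 : K) u = 1 := by
  ext m
  rw [coeff_binomPow]
  rw [Finset.sum_eq_single 0]
  · simp [bc_zero_right]
  · rintro (_ | n) _ hne
    · exact absurd rfl hne
    · rw [bc_zero_left, zero_mul]
  · intro h; exact absurd (mem_range.2 (Nat.succ_pos m)) h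

lemma binomPow_one' (hu : constantCoeff (R := K) u = 0) : binomPow (1 : K) u = 1 + u := by
  ext m
  rw [coeff_binomPow]
  match m with
  | 0 => simp [bc_zero_right, hu]
  | Nat.succ m =>
    rw [Finset.sum_range_succ', Finset.sum_range_succ']
    have hz : ∀ i ∈ range m, bc (1:K) (i+1+1) * coeff (R := K) (m+1) (u ^ (i+1+1)) = 0 := by
      intro i _
      rw [bc_one_left _ (by omega), zero_mul]
    rw [Finset.sum_congr rfl hz, Finset.sum_const_zero]
    simp [bc_zero_right, bc_one_one]

lemma constantCoeff_binomPow (σ : K) : constantCoeff (R := K) (binomPow σ u) = 1 := by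
  rw [← coeff_zero_eq_constantCoeff_apply, coeff_binomPow]
  simp [bc_zero_right]

lemma binomPow_derivative (σ : K) (hu : constantCoeff (R := K) u = 0) :
    d⁄dX K (binomPow σ u) = C (R := K) σ * d⁄dX K u * binomPow (σ - 1) u := by
  ext m
  have hL : coeff (R := K) m (d⁄dX K (binomPow σ u))
      = ∑ n ∈ range (m + 2), bc σ n * (coeff (R := K) (m+1) (u ^ n) * ((m:K) + 1)) := by
    rw [coeff_derivative, coeff_binomPow, Finset.sum_mul]
    push_cast
    refine Finset.sum_congr rfl fun n _ => by ring
  rw [hL]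
  have hre : C (R := K) σ * d⁄dX K u * binomPow (σ - 1) u
      = C (R := K) σ * (binomPow (σ - 1) u * d⁄dX K u) := by ring
  rw [hre, coeff_C_mul, coeff_binomPow_mul (σ - 1) hu _ m, Finset.mul_sum]
  rw [Finset.sum_range_succ']
  have h0 : bc σ 0 * (coeff (R := K) (m+1) (u ^ 0) * ((m:K)+1)) = 0 := by
    simp
  rw [h0, add_zero]
  refine Finset.sum_congr rfl fun n _ => ?_
  have hd : coeff (R := K) (m+1) (u ^ (n+1)) * ((m:K)+1) = coeff (R := K) m (d⁄dX K (u ^ (n+1))) :=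
    (coeff_derivative _ m).symm
  rw [hd, Derivation.leibniz_pow]
  have hcoef : coeff (R := K) m ((n + 1) • u ^ (n + 1 - 1) • d⁄dX K u)
      = ((n:K)+1) * coeff (R := K) m (u ^ n * d⁄dX K u) := by
    rw [Nat.add_sub_cancel, smul_eq_mul, map_nsmul, nsmul_eq_mul]
    push_cast; ring
  rw [hcoef]
  linear_combination (coeff (R := K) m (u ^ n * d⁄dX K u)) * bc_succ_mul σ n


section OneVar

variable (τ : K) {y : PowerSeries K}

lemma hu0 (h0 : constantCoeff (R := K) y = 0) : constantCoeff (R := K) (-y) = 0 := by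
  rw [map_neg, h0, neg_zero]

lemma hBadd (h0 : constantCoeff (R := K) y = 0) (σ ρ : K) :
    binomPow σ (-y) * binomPow ρ (-y) = binomPow (σ + ρ) (-y) :=
  binomPow_mul σ ρ (hu0 h0)

lemma hBpow (h0 : constantCoeff (R := K) y = 0) (n : ℕ) :
    (binomPow τ (-y)) ^ n = binomPow ((n : K) * τ) (-y) := by
  induction n with
  | zero => rw [pow_zero, Nat.cast_zero, zero_mul, binomPow_zero']
  | succ n ih =>
      rw [pow_succ, ih, hBadd h0]
      congr 1
      push_cast
      ring

lemma hwv (h0 : constantCoeff (R := K) y = 0) :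
    binomPow τ (-y) * binomPow (-τ) (-y) = 1 := by
  rw [hBadd h0, add_neg_cancel, binomPow_zero']

lemma hXv (h0 : constantCoeff (R := K) y = 0) (heq : y * binomPow τ (-y) = X) :
    y = X * binomPow (-τ) (-y) := by
  rw [← heq, mul_assoc, hwv τ h0, mul_one]

lemma hB1 (h0 : constantCoeff (R := K) y = 0) : binomPow (1 : K) (-y) = 1 - y := by
  rw [binomPow_one' (hu0 h0)]; ring

lemma hstar (h0 : constantCoeff (R := K) y = 0) (heq : y * binomPow τ (-y) = X) :
    binomPow τ (-y) * d⁄dX K y * (1 - C (R := K) (τ + 1) * y) = 1 - y := by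
  have hdB : d⁄dX K (binomPow τ (-y)) = C (R := K) τ * -(d⁄dX K y) * binomPow (τ - 1) (-y) := by
    rw [binomPow_derivative τ (hu0 h0), map_neg]
  have hE : y * (C (R := K) τ * -(d⁄dX K y) * binomPow (τ - 1) (-y))
      + binomPow τ (-y) * d⁄dX K y = 1 := by
    have h := congrArg (d⁄dX K) heq
    rw [derivative_X, Derivation.leibniz, smul_eq_mul, smul_eq_mul, hdB] at h
    exact h
  have h2 : binomPow (τ - 1) (-y) * (1 - y) = binomPow τ (-y) := by
    rw [← hB1 h0, hBadd h0]
    congr 1; ring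
  have hC : C (R := K) (τ + 1) = C (R := K) τ + 1 := by rw [map_add, map_one]
  rw [hC]
  linear_combination (1 - y) * hE + (C (R := K) τ * y * d⁄dX K y) * h2

lemma lemA0 (h0 : constantCoeff (R := K) y = 0) (heq : y * binomPow τ (-y) = X) :
    coeff (R := K) 0 (binomPow τ (-y) * d⁄dX K y) = 1 := by
  rw [coeff_zero_eq_constantCoeff_apply, map_mul, constantCoeff_binomPow, one_mul]
  have h1 : constantCoeff (R := K) (d⁄dX K y) = coeff (R := K) 1 y * ((0 : K) + 1) := by
    rw [← coeff_zero_eq_constantCoeff_apply, coeff_derivative]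
    norm_num
  rw [h1, hXv τ h0 heq, coeff_succ_X_mul, coeff_zero_eq_constantCoeff_apply,
    constantCoeff_binomPow]
  norm_num

lemma lemA (h0 : constantCoeff (R := K) y = 0) (heq : y * binomPow τ (-y) = X) (s : ℕ) :
    coeff (R := K) (s + 1) ((binomPow τ (-y)) ^ (s + 2) * d⁄dX K y) = 0 := by
  set w := binomPow τ (-y) with hw
  set v := binomPow (-τ) (-y) with hv
  have hwv1 : w * v = 1 := hwv τ h0
  have hyv : y = X * v := hXv τ h0 heq
  have hdy : d⁄dX K y = X * d⁄dX K v + v := by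
    conv_lhs => rw [hyv]
    rw [Derivation.leibniz, smul_eq_mul, smul_eq_mul, derivative_X, mul_one]
  have hrel : w * d⁄dX K v + v * d⁄dX K w = 0 := by
    have h := congrArg (d⁄dX K) hwv1
    rwa [Derivation.leibniz, smul_eq_mul, smul_eq_mul, Derivation.map_one_eq_zero] at h
  have hv2 : w ^ (s + 2) * d⁄dX K v = -(w ^ s * d⁄dX K w) := by
    linear_combination w ^ (s + 1) * hrel - (w ^ s * d⁄dX K w) * hwv1
  have hv1 : w ^ (s + 2) * v = w ^ (s + 1) := by
    linear_combination w ^ (s + 1) * hwv1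
  have hkey : w ^ (s + 2) * d⁄dX K y = X * -(w ^ s * d⁄dX K w) + w ^ (s + 1) := by
    rw [hdy]
    linear_combination X * hv2 + hv1
  rw [hkey, map_add, coeff_succ_X_mul, map_neg]
  have hpow : d⁄dX K (w ^ (s + 1)) = (s + 1) • (w ^ s * d⁄dX K w) := by
    rw [Derivation.leibniz_pow, Nat.add_sub_cancel, smul_eq_mul]
  have hcd : coeff (R := K) (s + 1) (w ^ (s + 1)) * ((s : K) + 1)
      = ((s : K) + 1) * coeff (R := K) s (w ^ s * d⁄dX K w) := by
    rw [← coeff_derivative, hpow, map_nsmul, nsmul_eq_mul]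
    push_cast
    ring
  have hne : ((s : K) + 1) ≠ 0 := by
    have := Nat.cast_add_one_ne_zero (R := K) s; simpa using this
  have : coeff (R := K) s (w ^ s * d⁄dX K w) = coeff (R := K) (s + 1) (w ^ (s + 1)) :=
    mul_left_cancel₀ hne (by linear_combination -hcd)
  rw [this]
  ring

lemma hR (h0 : constantCoeff (R := K) y = 0) (heq : y * binomPow τ (-y) = X) (k : ℕ) :
    coeff (R := K) k (d⁄dX K y * binomPow (-1 : K) (-y))
      = (∏ a ∈ range k, (((k : K) + 1) * τ + 1 + (a : K))) / (Nat.factorial k : K) := by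
  set w := binomPow τ (-y) with hwdef
  set v := binomPow (-τ) (-y) with hvdef
  have hwv1 : w * v = 1 := hwv τ h0
  have hyv : y = X * v := hXv τ h0 heq
  set σE : K := -(((k : K) + 1) * τ + 1) with hσE
  have hsplit : binomPow (-1 : K) (-y) = w ^ (k + 1) * binomPow σE (-y) := by
    rw [hBpow τ h0, hBadd h0]
    congr 1
    push_cast
    ring
  have hprod : d⁄dX K y * binomPow (-1 : K) (-y)
      = binomPow σE (-y) * (w ^ (k + 1) * d⁄dX K y) := by
    rw [hsplit]; ring
  rw [hprod, coeff_binomPow_mul σE (hu0 h0) _ k]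
  have hterm : ∀ j ∈ range (k + 1),
      bc σE j * coeff (R := K) k ((-y) ^ j * (w ^ (k + 1) * d⁄dX K y))
        = ((-1 : K) ^ j * bc σE j) * (if j = k then 1 else 0) := by
    intro j hj
    rw [mem_range] at hj
    have hneg : (-y) ^ j = C (R := K) ((-1 : K) ^ j) * y ^ j := by
      rw [neg_pow, map_pow, map_neg, map_one]
    rw [hneg, mul_assoc, coeff_C_mul]
    have hWyj : y ^ j * (w ^ (k + 1) * d⁄dX K y)
        = X ^ j * (w ^ (k + 1 - j) * d⁄dX K y) := by
      obtain ⟨t, ht⟩ : ∃ t, k + 1 - j = t + 1 := ⟨k - j, by omega⟩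
      rw [ht]
      have hjt : j + (t + 1) = k + 1 := by omega
      calc y ^ j * (w ^ (k + 1) * d⁄dX K y)
          = (X * v) ^ j * (w ^ (j + (t + 1)) * d⁄dX K y) := by rw [← hyv, hjt]
        _ = X ^ j * (w ^ (t + 1) * d⁄dX K y) * (w * v) ^ j := by
            rw [mul_pow, mul_pow, pow_add]; ring
        _ = X ^ j * (w ^ (t + 1) * d⁄dX K y) := by rw [hwv1, one_pow, mul_one]
    rw [hWyj]
    rw [coeff_X_pow_mul', if_pos (by omega : j ≤ k)]
    by_cases hjk : j = k
    · have h1 : k - j = 0 := by omega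
      have h2 : k + 1 - j = 1 := by omega
      rw [h1, h2, pow_one, if_pos hjk, hwdef, lemA0 τ h0 heq]
      ring
    · obtain ⟨m, hm⟩ : ∃ m, k - j = m + 1 := ⟨k - j - 1, by omega⟩
      have h2 : k + 1 - j = m + 2 := by omega
      rw [hm, h2, if_neg hjk, hwdef, lemA τ h0 heq m]
      ring
  rw [Finset.sum_congr rfl hterm]
  rw [Finset.sum_eq_single k]
  · rw [if_pos rfl, mul_one, hσE, bc, ← mul_div_assoc]
    congr 1
    rw [show ((-1 : K) ^ k) = ∏ _a ∈ range k, (-1 : K) by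
      rw [Finset.prod_const, Finset.card_range]]
    rw [← Finset.prod_mul_distrib]
    refine Finset.prod_congr rfl fun a _ => by ring
  · intro b _ hb
    rw [if_neg hb, mul_zero]
  · intro h
    exact absurd (mem_range.2 (Nat.lt_succ_self k)) h

lemma Fser_coeff_eq (h0 : constantCoeff (R := K) y = 0) (heq : y * binomPow τ (-y) = X) :
    (PowerSeries.mk fun n => if n = 0 then (0:K) else
        (∏ a ∈ Finset.range n, ((n : K) * τ + (a : K))) / (Nat.factorial n : K))
      = C (R := K) τ * (X * (d⁄dX K y * binomPow (-1 : K) (-y))) := by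
  ext m
  match m with
  | 0 =>
    rw [coeff_mk, if_pos rfl, coeff_zero_eq_constantCoeff_apply, map_mul, map_mul,
      constantCoeff_X]
    ring
  | Nat.succ k =>
    rw [coeff_mk, if_neg (Nat.succ_ne_zero k), coeff_C_mul, coeff_succ_X_mul, hR τ h0 heq k]
    have h1 : (∏ a ∈ range (k+1), ((((k+1) : ℕ) : K) * τ + (a : K)))
        = (((k : K) + 1) * τ) * ∏ a ∈ range k, (((k : K) + 1) * τ + 1 + (a : K)) := by
      rw [Finset.prod_range_succ']
      have hpp : (∏ a ∈ range k, ((((k+1) : ℕ) : K) * τ + ((a+1 : ℕ) : K)))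
          = ∏ a ∈ range k, (((k : K) + 1) * τ + 1 + (a : K)) := by
        refine Finset.prod_congr rfl fun a _ => by push_cast; ring
      rw [hpp]
      push_cast
      ring
    have hkne : ((k : K) + 1) ≠ 0 := by
      have := Nat.cast_add_one_ne_zero (R := K) k; simpa using this
    have hfne : ((Nat.factorial k : K)) ≠ 0 := Nat.cast_ne_zero.2 (Nat.factorial_ne_zero k)
    show (∏ a ∈ range (k+1), ((((k+1) : ℕ) : K) * τ + (a : K))) / (Nat.factorial (k+1) : K)
        = τ * ((∏ a ∈ range k, (((k : K) + 1) * τ + 1 + (a : K))) / (Nat.factorial k : K))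
    rw [h1, Nat.factorial_succ]
    push_cast
    field_simp

theorem oneVarMain (τ : K) {y : PowerSeries K} (h0 : constantCoeff (R := K) y = 0)
    (heq : y * binomPow τ (-y) = X) :
    (PowerSeries.mk fun n => if n = 0 then (0:K) else
        (∏ a ∈ Finset.range n, ((n : K) * τ + (a : K))) / (Nat.factorial n : K))
        * (1 - C (R := K) (τ + 1) * y)
      = C (R := K) τ * y := by
  have hs := hstar τ h0 heq
  have hwv1 := hwv τ h0
  have hyv := hXv τ h0 heq
  have hB1' : (1 - y) * binomPow (-1 : K) (-y) = 1 := by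
    rw [← hB1 h0, hBadd h0]
    norm_num [binomPow_zero']
  rw [Fser_coeff_eq τ h0 heq]
  have h5 : d⁄dX K y * (1 - C (R := K) (τ + 1) * y) = binomPow (-τ) (-y) * (1 - y) := by
    linear_combination binomPow (-τ) (-y) * hs
      - (d⁄dX K y * (1 - C (R := K) (τ + 1) * y)) * hwv1
  calc C (R := K) τ * (X * (d⁄dX K y * binomPow (-1 : K) (-y))) * (1 - C (R := K) (τ + 1) * y)
      = C (R := K) τ * (X * (binomPow (-1 : K) (-y) * (d⁄dX K y * (1 - C (R := K) (τ + 1) * y)))) := by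
        ring
    _ = C (R := K) τ * (X * (binomPow (-1 : K) (-y) * (binomPow (-τ) (-y) * (1 - y)))) := by
        rw [h5]
    _ = C (R := K) τ * ((X * binomPow (-τ) (-y)) * ((1 - y) * binomPow (-1 : K) (-y))) := by ring
    _ = C (R := K) τ * y := by rw [hB1', mul_one, ← hyv]

end OneVar

abbrev KK := RatFunc ℚ

lemma coeff_inVar (v : Fin 2) (f : PowerSeries KK) (d : Fin 2 →₀ ℕ) :
    MvPowerSeries.coeff (R := KK) d (inVar v f)
      = if ∀ w, w ≠ v → d w = 0 then PowerSeries.coeff (R := KK) (d v) f else 0 := rfl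

lemma inVar_one (v : Fin 2) : inVar v 1 = 1 := by
  apply MvPowerSeries.ext
  intro d
  rw [coeff_inVar, MvPowerSeries.coeff_one]
  by_cases hc : ∀ w, w ≠ v → d w = 0
  · rw [if_pos hc, PowerSeries.coeff_one]
    by_cases h0 : d v = 0
    · rw [if_pos h0, if_pos]
      ext w
      by_cases hwv : w = v
      · rw [hwv, h0]; rfl
      · rw [hc w hwv]; rfl
    · rw [if_neg h0, if_neg]
      intro hd
      exact h0 (by rw [hd]; rfl)
  · rw [if_neg hc, if_neg]
    intro hd
    exact hc (fun w _ => by rw [hd]; rfl)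

lemma inVar_C_mul (v : Fin 2) (a : KK) (f : PowerSeries KK) :
    inVar v (PowerSeries.C (R := KK) a * f) = MvPowerSeries.C (σ := Fin 2) (R := KK) a * inVar v f := by
  apply MvPowerSeries.ext
  intro d
  rw [coeff_inVar, MvPowerSeries.coeff_C_mul, coeff_inVar]
  by_cases hc : ∀ w, w ≠ v → d w = 0
  · rw [if_pos hc, if_pos hc, PowerSeries.coeff_C_mul]
  · rw [if_neg hc, if_neg hc, mul_zero]

lemma inVar_sub (v : Fin 2) (f g : PowerSeries KK) :
    inVar v (f - g) = inVar v f - inVar v g := by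
  apply MvPowerSeries.ext
  intro d
  rw [map_sub, coeff_inVar, coeff_inVar, coeff_inVar]
  by_cases hc : ∀ w, w ≠ v → d w = 0
  · rw [if_pos hc, if_pos hc, if_pos hc, map_sub]
  · rw [if_neg hc, if_neg hc, if_neg hc, sub_zero]

lemma inVar_mul (v : Fin 2) (f g : PowerSeries KK) :
    inVar v (f * g) = inVar v f * inVar v g := by
  apply MvPowerSeries.ext
  intro d
  rw [MvPowerSeries.coeff_mul, coeff_inVar]
  by_cases hc : ∀ w, w ≠ v → d w = 0
  · rw [if_pos hc]
    have hd : d = Finsupp.single v (d v) := by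
      ext w
      by_cases hwv : w = v
      · rw [hwv, Finsupp.single_eq_same]
      · rw [hc w hwv, Finsupp.single_eq_of_ne hwv]
    rw [PowerSeries.coeff_mul]
    conv_rhs => rw [hd]
    rw [Finsupp.antidiagonal_single, Finset.sum_map]
    refine Finset.sum_congr rfl fun p _ => ?_
    obtain ⟨p1, p2⟩ := p
    have h1 : ∀ (n : ℕ) (h : PowerSeries KK),
        MvPowerSeries.coeff (R := KK) (Finsupp.single v n) (inVar v h)
          = PowerSeries.coeff (R := KK) n h := by
      intro n h
      rw [coeff_inVar, if_pos, Finsupp.single_eq_same]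
      intro w hwv
      exact Finsupp.single_eq_of_ne hwv
    simp only [Function.Embedding.coe_prodMap, Function.Embedding.coeFn_mk, Prod.map_apply]
    rw [h1, h1]
  · rw [if_neg hc]
    push_neg at hc
    obtain ⟨w, hwv, hdw⟩ := hc
    refine (Finset.sum_eq_zero fun p hp => ?_).symm
    rw [Finset.HasAntidiagonal.mem_antidiagonal] at hp
    have hw : p.1 w + p.2 w = d w := by rw [← hp]; rfl
    by_cases h1 : p.1 w = 0
    · have h2 : p.2 w ≠ 0 := by omega
      rw [coeff_inVar v g p.2, if_neg (fun hall => h2 (hall w hwv)), mul_zero]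
    · rw [coeff_inVar v f p.1, if_neg (fun hall => h1 (hall w hwv)), zero_mul]

lemma coeff_inVar01_mul (f g : PowerSeries KK) (d : Fin 2 →₀ ℕ) :
    MvPowerSeries.coeff (R := KK) d (inVar 0 f * inVar 1 g)
      = PowerSeries.coeff (R := KK) (d 0) f * PowerSeries.coeff (R := KK) (d 1) g := by
  rw [MvPowerSeries.coeff_mul]
  have hmem : (Finsupp.single (0 : Fin 2) (d 0), Finsupp.single (1 : Fin 2) (d 1))
      ∈ antidiagonal d := by
    rw [Finset.HasAntidiagonal.mem_antidiagonal]
    ext w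
    have h2 : w = 0 ∨ w = 1 := by omega
    rcases h2 with h | h <;> subst h <;>
      simp [Finsupp.single_apply]
  rw [Finset.sum_eq_single_of_mem _ hmem]
  · rw [coeff_inVar, coeff_inVar, if_pos, if_pos, Finsupp.single_eq_same,
      Finsupp.single_eq_same]
    · intro w hw; exact Finsupp.single_eq_of_ne hw
    · intro w hw; exact Finsupp.single_eq_of_ne hw
  · intro b hb hne
    rw [Finset.HasAntidiagonal.mem_antidiagonal] at hb
    by_cases hb1 : ∀ w, w ≠ (0 : Fin 2) → b.1 w = 0
    · by_cases hb2 : ∀ w, w ≠ (1 : Fin 2) → b.2 w = 0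
      · exfalso
        apply hne
        have h10 : b.1 1 = 0 := hb1 1 (by decide)
        have h20 : b.2 0 = 0 := hb2 0 (by decide)
        have hd0 : d 0 = b.1 0 := by
          rw [← hb]
          show b.1 0 + b.2 0 = b.1 0
          rw [h20, add_zero]
        have hd1 : d 1 = b.2 1 := by
          rw [← hb]
          show b.1 1 + b.2 1 = b.2 1
          rw [h10, zero_add]
        have e1 : b.1 = Finsupp.single (0 : Fin 2) (d 0) := by
          ext w
          have h2 : w = 0 ∨ w = 1 := by omega
          rcases h2 with h | h <;> subst h
          · rw [Finsupp.single_eq_same, hd0]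
          · rw [h10, Finsupp.single_eq_of_ne (by decide)]
        have e2 : b.2 = Finsupp.single (1 : Fin 2) (d 1) := by
          ext w
          have h2 : w = 0 ∨ w = 1 := by omega
          rcases h2 with h | h <;> subst h
          · rw [h20, Finsupp.single_eq_of_ne (by decide)]
          · rw [Finsupp.single_eq_same, hd1]
        exact Prod.ext e1 e2
      · rw [coeff_inVar 1 g b.2, if_neg hb2, mul_zero]
    · rw [coeff_inVar 0 f b.1, if_neg hb1, zero_mul]

/-- the F series -/
def Fq : PowerSeries KK :=
  PowerSeries.mk fun n => if n = 0 then (0 : KK) else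
    (∏ a ∈ Finset.range n, ((n : KK) * RatFunc.X + (a : KK))) / (Nat.factorial n : KK)

lemma coeff_Fq (n : ℕ) :
    PowerSeries.coeff (R := KK) n Fq = if n = 0 then 0 else lambertCoeff RatFunc.X n := by
  rw [Fq, coeff_mk, lambertCoeff]

lemma euler_eq :
    eulerOp (C02 RatFunc.X)
      = MvPowerSeries.C (σ := Fin 2) (R := KK) (-((RatFunc.X + 1) / RatFunc.X))
          * (inVar 0 Fq * inVar 1 Fq) := by
  apply MvPowerSeries.ext
  intro d
  rw [MvPowerSeries.coeff_C_mul, coeff_inVar01_mul, coeff_Fq, coeff_Fq]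
  rw [MvPowerSeries.coeff_apply]
  show ((d 0 + d 1 : ℕ) : KK) * C02 RatFunc.X d = _
  rw [C02]
  by_cases h0 : d 0 = 0
  · rw [if_neg (by tauto), if_pos h0, mul_zero, zero_mul, mul_zero]
  · by_cases h1 : d 1 = 0
    · rw [if_neg (by tauto), if_pos h1, mul_zero, mul_zero, mul_zero]
    · rw [if_pos ⟨h0, h1⟩, if_neg h0, if_neg h1]
      have hne : ((d 0 + d 1 : ℕ) : KK) ≠ 0 := by
        rw [Nat.cast_ne_zero]
        omega
      set A : KK := (RatFunc.X + 1) / RatFunc.X with hA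
      set c : KK := ((d 0 + d 1 : ℕ) : KK) with hc
      set l0 : KK := lambertCoeff RatFunc.X (d 0)
      set l1 : KK := lambertCoeff RatFunc.X (d 1)
      show c * -(A * (1 / c) * l0 * l1) = -A * (l0 * l1)
      field_simp


end C02Aux

theorem c02_euler (y : PowerSeries (RatFunc ℚ))
    (h0 : PowerSeries.constantCoeff (R := RatFunc ℚ) y = 0)
    (heq : y * binomPow (RatFunc.X) (-y) = PowerSeries.X) :
    eulerOp (C02 RatFunc.X) *
        ((1 - MvPowerSeries.C (σ := Fin 2) (R := RatFunc ℚ) (RatFunc.X + 1) * inVar 0 y) *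
          (1 - MvPowerSeries.C (σ := Fin 2) (R := RatFunc ℚ) (RatFunc.X + 1) * inVar 1 y)) =
      MvPowerSeries.C (σ := Fin 2) (R := RatFunc ℚ) (-(RatFunc.X * (RatFunc.X + 1))) *
        (inVar 0 y * inVar 1 y) := by
  classical
  have hmain : C02Aux.Fq * (1 - PowerSeries.C (R := RatFunc ℚ) (RatFunc.X + 1) * y)
      = PowerSeries.C (R := RatFunc ℚ) RatFunc.X * y :=
    C02Aux.oneVarMain RatFunc.X h0 heq
  have hW : ∀ v : Fin 2,
      1 - MvPowerSeries.C (σ := Fin 2) (R := RatFunc ℚ) (RatFunc.X + 1) * inVar v y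
        = inVar v (1 - PowerSeries.C (R := RatFunc ℚ) (RatFunc.X + 1) * y) := by
    intro v
    rw [C02Aux.inVar_sub, C02Aux.inVar_C_mul, C02Aux.inVar_one]
  rw [C02Aux.euler_eq, hW 0, hW 1]
  set W : PowerSeries (RatFunc ℚ) := 1 - PowerSeries.C (R := RatFunc ℚ) (RatFunc.X + 1) * y with hWdef
  calc MvPowerSeries.C (σ := Fin 2) (R := RatFunc ℚ) (-((RatFunc.X + 1) / RatFunc.X))
        * (inVar 0 C02Aux.Fq * inVar 1 C02Aux.Fq) * (inVar 0 W * inVar 1 W)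
      = MvPowerSeries.C (σ := Fin 2) (R := RatFunc ℚ) (-((RatFunc.X + 1) / RatFunc.X))
        * ((inVar 0 C02Aux.Fq * inVar 0 W) * (inVar 1 C02Aux.Fq * inVar 1 W)) := by ring
    _ = MvPowerSeries.C (σ := Fin 2) (R := RatFunc ℚ) (-((RatFunc.X + 1) / RatFunc.X))
        * (inVar 0 (C02Aux.Fq * W) * inVar 1 (C02Aux.Fq * W)) := by
          rw [← C02Aux.inVar_mul, ← C02Aux.inVar_mul]
    _ = MvPowerSeries.C (σ := Fin 2) (R := RatFunc ℚ) (-((RatFunc.X + 1) / RatFunc.X))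
        * (inVar 0 (PowerSeries.C (R := RatFunc ℚ) RatFunc.X * y)
            * inVar 1 (PowerSeries.C (R := RatFunc ℚ) RatFunc.X * y)) := by
          rw [hmain]
    _ = MvPowerSeries.C (σ := Fin 2) (R := RatFunc ℚ) (-((RatFunc.X + 1) / RatFunc.X))
        * ((MvPowerSeries.C (σ := Fin 2) (R := RatFunc ℚ) RatFunc.X * inVar 0 y)
            * (MvPowerSeries.C (σ := Fin 2) (R := RatFunc ℚ) RatFunc.X * inVar 1 y)) := by
          rw [C02Aux.inVar_C_mul, C02Aux.inVar_C_mul]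
    _ = (MvPowerSeries.C (σ := Fin 2) (R := RatFunc ℚ) (-((RatFunc.X + 1) / RatFunc.X))
          * MvPowerSeries.C (σ := Fin 2) (R := RatFunc ℚ) RatFunc.X
          * MvPowerSeries.C (σ := Fin 2) (R := RatFunc ℚ) RatFunc.X)
        * (inVar 0 y * inVar 1 y) := by ring
    _ = MvPowerSeries.C (σ := Fin 2) (R := RatFunc ℚ) (-(RatFunc.X * (RatFunc.X + 1)))
        * (inVar 0 y * inVar 1 y) := by
          rw [← map_mul, ← map_mul]
          congr 1
          have hX : (RatFunc.X : RatFunc ℚ) ≠ 0 := RatFunc.X_ne_zero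
          field_simp

end
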